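/- For a set P of n ≥ 5 points in convex position, among the union max-cliques of the path graph G(P), all have size 2 except for exactly one, which has size n and whose vertices are precisely the n boundary paths of P (each consisting of all hull edges except one). -/

import Mathlib

namespace PG

/-- The `k`-th vertex (mod `n`) of the convex polygon. -/
def pt (n : ℕ) (hn : 0 < n) (k : ℕ) : Fin n := ⟨k % n, Nat.mod_lt _ hn⟩

/-- `e` is a boundary (convex hull) edge of the convex `n`-gon. -/
def IsHullEdge {n : ℕ} (e : Sym2 (Fin n)) : Prop :=
  ∃ a b : Fin n, e = s(a, b) ∧ ((a.val + 1) % n = b.val ∨ (b.val + 1) % n = a.val)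

instance {n : ℕ} : DecidablePred (IsHullEdge (n := n)) := fun _ => by
  unfold IsHullEdge; infer_instance

/-- Two chords of the convex `n`-gon cross (intersect in interior points):
their endpoint pairs are all distinct and separate each other in the cyclic order. -/
def Crosses {n : ℕ} (e f : Sym2 (Fin n)) : Prop :=
  ∃ a b c d : Fin n, e = s(a, b) ∧ f = s(c, d) ∧
    a ≠ b ∧ c ≠ d ∧ a ≠ c ∧ a ≠ d ∧ b ≠ c ∧ b ≠ d ∧
    (((c.val + n - a.val) % n < (b.val + n - a.val) % n) ↔
      ¬((d.val + n - a.val) % n < (b.val + n - a.val) % n))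

instance {n : ℕ} (e f : Sym2 (Fin n)) : Decidable (Crosses e f) := by
  unfold Crosses; infer_instance

/-- The edge set of the spanning path visiting the points in the order given
by the permutation `p`. -/
def pathEdges {n : ℕ} (p : Equiv.Perm (Fin n)) : Finset (Sym2 (Fin n)) :=
  Finset.univ.filter (fun e => ∃ i j : Fin n, e = s(p i, p j) ∧ j.val = i.val + 1)

/-- `E` is the edge set of a non-crossing (plane) spanning path. -/
def IsNCPath {n : ℕ} (E : Finset (Sym2 (Fin n))) : Prop :=
  (∃ p : Equiv.Perm (Fin n), E = pathEdges p) ∧ ∀ e ∈ E, ∀ f ∈ E, ¬ Crosses e f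

instance {n : ℕ} : DecidablePred (IsNCPath (n := n)) := fun _ => by
  unfold IsNCPath pathEdges; infer_instance

/-- Vertices of the path graph `G(P)`: non-crossing spanning paths. -/
def PVert (n : ℕ) := {E : Finset (Sym2 (Fin n)) // IsNCPath E}

instance {n : ℕ} : Fintype (PVert n) := Subtype.fintype _
instance {n : ℕ} : DecidableEq (PVert n) := Subtype.instDecidableEq

/-- The path graph `G(P)`: two plane spanning paths are adjacent iff their
edge sets differ in exactly two edges. -/
def pathGraph (n : ℕ) : SimpleGraph (PVert n) where
  Adj u v := u ≠ v ∧ (u.1 \ v.1 ∪ v.1 \ u.1).card = 2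
  symm := ⟨by rintro u v ⟨h1, h2⟩; exact ⟨h1.symm, by rwa [Finset.union_comm]⟩⟩
  loopless := ⟨by rintro u ⟨h, _⟩; exact h rfl⟩

instance {n : ℕ} : DecidableRel (pathGraph n).Adj := fun u v => by
  unfold pathGraph; infer_instance

/-- `v` is a boundary path: all its edges are hull edges. -/
def IsBoundary {n : ℕ} (v : PVert n) : Prop := ∀ e ∈ v.1, IsHullEdge e

/-- Number of diagonals (the level) of a path. -/
def diagCount {n : ℕ} (v : PVert n) : ℕ :=
  (v.1.filter (fun e => ¬ IsHullEdge e)).card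

/-- Degree of a point in an edge set. -/
def degIn {n : ℕ} (E : Finset (Sym2 (Fin n))) (x : Fin n) : ℕ :=
  (E.filter (fun e => x ∈ e)).card

/-- The union max-clique of adjacent `u, v`: all plane spanning paths whose edge set
is `u ∪ v` minus one edge. -/
def unionClique {n : ℕ} (u v : PVert n) : Set (PVert n) :=
  {w | ∃ e ∈ u.1 ∪ v.1, w.1 = (u.1 ∪ v.1).erase e}

/-! ### Arithmetic helpers -/

/-- mod reduction for numbers below `2n`. -/
lemma mod2n {n x : ℕ} (hn : 0 < n) (hx : x < 2 * n) :
    x % n = if x < n then x else x - n := by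
  split
  · exact Nat.mod_eq_of_lt ‹_›
  · have h : x - n < n := by omega
    have : x % n = (x - n) % n := by
      conv_lhs => rw [show x = (x - n) + n by omega]
      simp [Nat.add_mod_right]
    rw [this, Nat.mod_eq_of_lt h]

lemma modsub {n a c : ℕ} (ha : a < n) (hc : c < n) :
    (c + n - a) % n = if a ≤ c then c - a else c + n - a := by
  have h2 : c + n - a < 2 * n := by omega
  rw [mod2n (by omega) h2]
  split <;> split <;> omega

lemma succ_mod {n t : ℕ} (hn : 2 ≤ n) : (t + 1) % n = (t % n + 1) % n := by
  conv_lhs => rw [Nat.add_mod]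
  rw [Nat.mod_eq_of_lt (show 1 < n by omega)]

lemma add_mod_eq_self_iff {n j m : ℕ} (hn : 0 < n) :
    (j + m) % n = j % n ↔ m % n = 0 := by
  constructor
  · intro h
    rw [Nat.add_mod] at h
    have hj := Nat.mod_lt j hn
    have hm := Nat.mod_lt m hn
    rw [mod2n hn (by omega)] at h
    split at h <;> omega
  · intro h
    rw [Nat.add_mod, h, Nat.add_zero, Nat.mod_mod]

/-! ### Cyclic indexing of vertices and edges of a path -/

section Paths

variable {n : ℕ} (hn : 0 < n)

/-- vertex along the permutation path, index taken mod `n`. -/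
def cyc (p : Equiv.Perm (Fin n)) (i : ℕ) : Fin n := p (pt n hn i)

/-- `i`-th edge of the path (cyclically extended). -/
def Fe (p : Equiv.Perm (Fin n)) (i : ℕ) : Sym2 (Fin n) := s(cyc hn p i, cyc hn p (i + 1))

lemma cyc_eq_iff {p : Equiv.Perm (Fin n)} {i j : ℕ} :
    cyc hn p i = cyc hn p j ↔ i % n = j % n := by
  unfold cyc pt
  rw [p.injective.eq_iff]
  exact ⟨fun h => congrArg Fin.val h, fun h => Fin.ext h⟩

lemma pt_val (k : ℕ) : (pt n hn k).val = k % n := rfl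

lemma mem_pathEdges {p : Equiv.Perm (Fin n)} {e : Sym2 (Fin n)} :
    e ∈ pathEdges p ↔ ∃ i : ℕ, i + 1 < n ∧ e = Fe hn p i := by
  unfold pathEdges
  simp only [Finset.mem_filter, Finset.mem_univ, true_and]
  constructor
  · rintro ⟨i, j, he, hij⟩
    refine ⟨i.val, by omega, ?_⟩
    have h1 : pt n hn i.val = i := Fin.ext (Nat.mod_eq_of_lt i.isLt)
    have h2 : pt n hn (i.val + 1) = j := Fin.ext (by rw [pt_val, Nat.mod_eq_of_lt (by omega)]; omega)
    rw [he]; unfold Fe cyc; rw [h1, h2]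
  · rintro ⟨i, hi, he⟩
    exact ⟨pt n hn i, pt n hn (i + 1), by
      rw [he]; rfl, by
      rw [pt_val, pt_val, Nat.mod_eq_of_lt (by omega), Nat.mod_eq_of_lt (by omega)]⟩

lemma Fe_inj {p : Equiv.Perm (Fin n)} {i j : ℕ} (hi : i + 1 < n) (hj : j + 1 < n)
    (h : Fe hn p i = Fe hn p j) : i = j := by
  unfold Fe at h
  rw [Sym2.eq_iff] at h
  rcases h with ⟨h1, _⟩ | ⟨h1, h2⟩
  · rw [cyc_eq_iff hn, Nat.mod_eq_of_lt (by omega), Nat.mod_eq_of_lt (by omega)] at h1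
    exact h1
  · rw [cyc_eq_iff hn, Nat.mod_eq_of_lt (by omega), Nat.mod_eq_of_lt (by omega)] at h1 h2
    omega

lemma pathEdges_eq_image (p : Equiv.Perm (Fin n)) :
    pathEdges p = (Finset.range (n - 1)).image (Fe hn p) := by
  ext e
  rw [mem_pathEdges hn, Finset.mem_image]
  constructor
  · rintro ⟨i, hi, he⟩; exact ⟨i, Finset.mem_range.2 (by omega), he.symm⟩
  · rintro ⟨i, hi, he⟩; exact ⟨i, by have := Finset.mem_range.1 hi; omega, he.symm⟩

include hn in
lemma card_pathEdges (p : Equiv.Perm (Fin n)) : (pathEdges p).card = n - 1 := by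
  rw [pathEdges_eq_image hn p, Finset.card_image_of_injOn, Finset.card_range]
  intro i hi j hj h
  exact Fe_inj hn (by have := Finset.mem_range.1 hi; omega) (by have := Finset.mem_range.1 hj; omega) h

lemma cyc_ne_succ {p : Equiv.Perm (Fin n)} (h2 : 2 ≤ n) (i : ℕ) :
    cyc hn p i ≠ cyc hn p (i + 1) := by
  rw [Ne, cyc_eq_iff hn]
  intro h
  rw [eq_comm, add_mod_eq_self_iff hn] at h
  rw [Nat.mod_eq_of_lt (by omega)] at h
  omega

lemma mem_Fe_iff {p : Equiv.Perm (Fin n)} {x : Fin n} {i : ℕ} :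
    x ∈ Fe hn p i ↔ (p.symm x).val = i % n ∨ (p.symm x).val = (i + 1) % n := by
  unfold Fe
  rw [Sym2.mem_iff]
  constructor
  · rintro (h | h) <;> [left; right] <;>
      (rw [h]; unfold cyc; rw [Equiv.symm_apply_apply]; rfl)
  · rintro (h | h) <;> [left; right] <;>
      (have : x = p (p.symm x) := (Equiv.apply_symm_apply _ _).symm
       rw [this]; unfold cyc; congr 1; exact Fin.ext h)

lemma symm_cyc {p : Equiv.Perm (Fin n)} {i : ℕ} :
    (p.symm (cyc hn p i)).val = i % n := by
  unfold cyc; rw [Equiv.symm_apply_apply, pt_val]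

lemma eq_cyc_iff {p : Equiv.Perm (Fin n)} {x : Fin n} {i : ℕ} :
    x = cyc hn p i ↔ (p.symm x).val = i % n := by
  constructor
  · rintro rfl; exact symm_cyc hn
  · intro h
    have h2 : p.symm x = pt n hn i := Fin.ext (by rw [pt_val]; exact h)
    rw [← Equiv.apply_symm_apply p x, h2]; rfl

include hn in
lemma degIn_pathEdges_le_two (p : Equiv.Perm (Fin n)) (x : Fin n) :
    degIn (pathEdges p) x ≤ 2 := by
  unfold degIn
  rw [pathEdges_eq_image hn p, Finset.filter_image]
  refine le_trans Finset.card_image_le ?_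
  have hsub : (Finset.range (n-1)).filter (fun i => x ∈ Fe hn p i)
      ⊆ {(p.symm x).val, (p.symm x).val - 1} := by
    intro i hi
    rw [Finset.mem_filter, Finset.mem_range] at hi
    obtain ⟨hi1, hi2⟩ := hi
    rw [mem_Fe_iff hn, Nat.mod_eq_of_lt (by omega), Nat.mod_eq_of_lt (by omega)] at hi2
    simp only [Finset.mem_insert, Finset.mem_singleton]
    omega
  refine le_trans (Finset.card_le_card hsub) ?_
  refine le_trans (Finset.card_insert_le _ _) ?_
  simp

lemma three_le_degIn {E : Finset (Sym2 (Fin n))} {x : Fin n} {e1 e2 e3 : Sym2 (Fin n)}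
    (h1 : e1 ∈ E) (h2 : e2 ∈ E) (h3 : e3 ∈ E) (hx1 : x ∈ e1) (hx2 : x ∈ e2) (hx3 : x ∈ e3)
    (d12 : e1 ≠ e2) (d13 : e1 ≠ e3) (d23 : e2 ≠ e3) : 3 ≤ degIn E x := by
  unfold degIn
  have hsub : ({e1, e2, e3} : Finset _) ⊆ E.filter (fun e => x ∈ e) := by
    intro e he
    simp only [Finset.mem_insert, Finset.mem_singleton] at he
    rcases he with rfl | rfl | rfl <;> simp [Finset.mem_filter, *]
  refine le_trans (le_of_eq ?_) (Finset.card_le_card hsub)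
  rw [Finset.card_insert_of_notMem (by simp [d12, d13]), Finset.card_pair d23]

include hn in
lemma path_min_degree {p : Equiv.Perm (Fin n)} {C : Finset (Sym2 (Fin n))}
    (hsub : C ⊆ pathEdges p) (hne : C.Nonempty)
    (hdeg : ∀ x : Fin n, (C.filter (fun e => x ∈ e)).card ≠ 1) : False := by
  classical
  set I := (Finset.range (n-1)).filter (fun i => Fe hn p i ∈ C) with hI
  have hIne : I.Nonempty := by
    obtain ⟨e, he⟩ := hne
    obtain ⟨i, hi, rfl⟩ := (mem_pathEdges hn).1 (hsub he)
    exact ⟨i, by rw [hI, Finset.mem_filter, Finset.mem_range]; exact ⟨by omega, he⟩⟩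
  set i0 := I.min' hIne with hi0def
  have hi0I : i0 ∈ I := I.min'_mem hIne
  rw [hI, Finset.mem_filter, Finset.mem_range] at hi0I
  apply hdeg (cyc hn p i0)
  have heq : C.filter (fun e => cyc hn p i0 ∈ e) = {Fe hn p i0} := by
    ext e
    rw [Finset.mem_filter, Finset.mem_singleton]
    constructor
    · rintro ⟨heC, hxe⟩
      obtain ⟨j, hj, rfl⟩ := (mem_pathEdges hn).1 (hsub heC)
      rw [mem_Fe_iff hn, symm_cyc hn, Nat.mod_eq_of_lt (show i0 < n by omega),
        Nat.mod_eq_of_lt (by omega), Nat.mod_eq_of_lt (by omega)] at hxe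
      rcases hxe with rfl | h
      · rfl
      · exfalso
        have hjI : j ∈ I := by rw [hI, Finset.mem_filter, Finset.mem_range]; exact ⟨by omega, heC⟩
        have := I.min'_le j hjI
        omega
    · rintro rfl
      refine ⟨hi0I.2, ?_⟩
      rw [mem_Fe_iff hn, symm_cyc hn]
      left; rfl
  rw [heq, Finset.card_singleton]

include hn in
lemma cycle_no_deg_one {p : Equiv.Perm (Fin n)} {a b : ℕ} (hab : a + 2 ≤ b) (hb : b < n)
    (x : Fin n) :
    ((insert (s(cyc hn p a, cyc hn p b)) ((Finset.Ico a b).image (Fe hn p))).filter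
      (fun e => x ∈ e)).card ≠ 1 := by
  classical
  set g := s(cyc hn p a, cyc hn p b) with hg
  set t := (p.symm x).val with ht
  have htn : t < n := (p.symm x).isLt
  have hxg : x ∈ g ↔ t = a ∨ t = b := by
    rw [hg, Sym2.mem_iff, eq_cyc_iff hn, eq_cyc_iff hn, ← ht,
      Nat.mod_eq_of_lt (by omega), Nat.mod_eq_of_lt hb]
  have hxF : ∀ i : ℕ, i + 1 < n → (x ∈ Fe hn p i ↔ t = i ∨ t = i + 1) := by
    intro i hi
    rw [mem_Fe_iff hn, ← ht, Nat.mod_eq_of_lt (by omega), Nat.mod_eq_of_lt (by omega)]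
  have hFinj : ∀ i j : ℕ, i + 1 < n → j + 1 < n → Fe hn p i = Fe hn p j → i = j :=
    fun i j hi hj => Fe_inj hn hi hj
  have hgF : ∀ i : ℕ, a ≤ i → i < b → g ≠ Fe hn p i := by
    intro i hi1 hi2 h
    rw [hg] at h
    unfold Fe at h
    rw [Sym2.eq_iff] at h
    rcases h with ⟨h1, h2⟩ | ⟨h1, h2⟩ <;>
      rw [cyc_eq_iff hn] at h1 h2 <;>
      rw [Nat.mod_eq_of_lt (by omega), Nat.mod_eq_of_lt (by omega)] at h1 <;>
      rw [Nat.mod_eq_of_lt (by omega), Nat.mod_eq_of_lt (by omega)] at h2 <;>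
      omega
  have hmemC : ∀ e, e ∈ insert g ((Finset.Ico a b).image (Fe hn p)) ↔
      e = g ∨ ∃ i, a ≤ i ∧ i < b ∧ e = Fe hn p i := by
    intro e
    simp only [Finset.mem_insert, Finset.mem_image, Finset.mem_Ico]
    constructor
    · rintro (h | ⟨i, ⟨h1, h2⟩, h3⟩)
      · exact Or.inl h
      · exact Or.inr ⟨i, h1, h2, h3.symm⟩
    · rintro (h | ⟨i, h1, h2, h3⟩)
      · exact Or.inl h
      · exact Or.inr ⟨i, ⟨h1, h2⟩, h3.symm⟩
  rcases lt_or_ge t a with hca | hca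
  · -- t < a : empty
    have : (insert g ((Finset.Ico a b).image (Fe hn p))).filter (fun e => x ∈ e) = ∅ := by
      rw [Finset.filter_eq_empty_iff]
      intro e he hx
      rcases (hmemC e).1 he with rfl | ⟨i, h1, h2, rfl⟩
      · rcases hxg.1 hx with h | h <;> omega
      · rcases (hxF i (by omega)).1 hx with h | h <;> omega
    rw [this, Finset.card_empty]; omega
  rcases lt_or_ge b t with hcb | hcb
  · -- b < t : empty
    have : (insert g ((Finset.Ico a b).image (Fe hn p))).filter (fun e => x ∈ e) = ∅ := by
      rw [Finset.filter_eq_empty_iff]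
      intro e he hx
      rcases (hmemC e).1 he with rfl | ⟨i, h1, h2, rfl⟩
      · rcases hxg.1 hx with h | h <;> omega
      · rcases (hxF i (by omega)).1 hx with h | h <;> omega
    rw [this, Finset.card_empty]; omega
  by_cases hta : t = a
  · -- t = a : {g, Fe a}
    have heq : (insert g ((Finset.Ico a b).image (Fe hn p))).filter (fun e => x ∈ e)
        = {g, Fe hn p a} := by
      ext e
      simp only [Finset.mem_filter, Finset.mem_insert, Finset.mem_singleton,
        Finset.mem_image, Finset.mem_Ico]
      constructor
      · rintro ⟨rfl | ⟨i, ⟨h1, h2⟩, rfl⟩, hx⟩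
        · exact Or.inl rfl
        · rcases (hxF i (by omega)).1 hx with h | h
          · exact Or.inr (by rw [← h, hta])
          · omega
      · rintro (rfl | rfl)
        · exact ⟨Or.inl rfl, hxg.2 (Or.inl hta)⟩
        · exact ⟨Or.inr ⟨a, ⟨le_refl a, by omega⟩, rfl⟩, (hxF a (by omega)).2 (Or.inl hta)⟩
    rw [heq, Finset.card_pair (hgF a (le_refl a) (by omega))]; omega
  by_cases htb : t = b
  · -- t = b : {g, Fe (b-1)}
    have heq : (insert g ((Finset.Ico a b).image (Fe hn p))).filter (fun e => x ∈ e)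
        = {g, Fe hn p (b - 1)} := by
      ext e
      simp only [Finset.mem_filter, Finset.mem_insert, Finset.mem_singleton,
        Finset.mem_image, Finset.mem_Ico]
      constructor
      · rintro ⟨rfl | ⟨i, ⟨h1, h2⟩, rfl⟩, hx⟩
        · exact Or.inl rfl
        · rcases (hxF i (by omega)).1 hx with h | h
          · omega
          · exact Or.inr (by rw [show b - 1 = i by omega])
      · rintro (rfl | rfl)
        · exact ⟨Or.inl rfl, hxg.2 (Or.inr htb)⟩
        · exact ⟨Or.inr ⟨b - 1, ⟨by omega, by omega⟩, rfl⟩,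
            (hxF (b - 1) (by omega)).2 (Or.inr (by omega))⟩
    rw [heq, Finset.card_pair (hgF (b - 1) (by omega) (by omega))]; omega
  · -- a < t < b : {Fe (t-1), Fe t}
    have hta' : a < t := by omega
    have htb' : t < b := by omega
    have heq : (insert g ((Finset.Ico a b).image (Fe hn p))).filter (fun e => x ∈ e)
        = {Fe hn p (t - 1), Fe hn p t} := by
      ext e
      simp only [Finset.mem_filter, Finset.mem_insert, Finset.mem_singleton,
        Finset.mem_image, Finset.mem_Ico]
      constructor
      · rintro ⟨rfl | ⟨i, ⟨h1, h2⟩, rfl⟩, hx⟩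
        · rcases hxg.1 hx with h | h <;> omega
        · rcases (hxF i (by omega)).1 hx with h | h
          · exact Or.inr (by rw [h])
          · exact Or.inl (by rw [show t - 1 = i by omega])
      · rintro (rfl | rfl)
        · exact ⟨Or.inr ⟨t - 1, ⟨by omega, by omega⟩, rfl⟩,
            (hxF (t - 1) (by omega)).2 (Or.inr (by omega))⟩
        · exact ⟨Or.inr ⟨t, ⟨by omega, by omega⟩, rfl⟩, (hxF t (by omega)).2 (Or.inl rfl)⟩
    have hne2 : Fe hn p (t - 1) ≠ Fe hn p t := by
      intro h
      have := hFinj _ _ (by omega) (by omega) h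
      omega
    rw [heq, Finset.card_pair hne2]; omega

end Paths


/-! ### Hull edges -/

lemma isHullEdge_pair {n : ℕ} {a b : Fin n} (h : IsHullEdge s(a, b)) :
    (a.val + 1) % n = b.val ∨ (b.val + 1) % n = a.val := by
  obtain ⟨a0, b0, heq, h0⟩ := h
  rw [Sym2.eq_iff] at heq
  rcases heq with ⟨rfl, rfl⟩ | ⟨rfl, rfl⟩
  · exact h0
  · tauto

lemma hull_not_crosses {n : ℕ} {e f : Sym2 (Fin n)} (he : IsHullEdge e) :
    ¬ Crosses e f := by
  rintro ⟨a, b, c, d, rfl, rfl, hab, hcd, hac, had, hbc, hbd, hsep⟩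
  have hn : 0 < n := Fin.pos a
  have hvab : a.val ≠ b.val := fun h => hab (Fin.ext h)
  have hvac : a.val ≠ c.val := fun h => hac (Fin.ext h)
  have hvad : a.val ≠ d.val := fun h => had (Fin.ext h)
  have hvbc : b.val ≠ c.val := fun h => hbc (Fin.ext h)
  have hvbd : b.val ≠ d.val := fun h => hbd (Fin.ext h)
  have ha := a.isLt; have hb := b.isLt; have hc := c.isLt; have hd := d.isLt
  rcases isHullEdge_pair he with hp | hp <;>
    rw [mod2n hn (by omega)] at hp <;>
    rw [modsub a.isLt c.isLt, modsub a.isLt d.isLt, modsub a.isLt b.isLt] at hsep <;>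
    split_ifs at hsep <;> split_ifs at hp <;> omega

/-- the edge set of the hull cycle. -/
def hullE (n : ℕ) (hn : 0 < n) : Finset (Sym2 (Fin n)) :=
  (Finset.range n).image (fun k => s(pt n hn k, pt n hn (k + 1)))

lemma mem_hullE {n : ℕ} (hn : 0 < n) (h2 : 2 ≤ n) {e : Sym2 (Fin n)} :
    e ∈ hullE n hn ↔ IsHullEdge e := by
  constructor
  · intro he
    obtain ⟨k, hk, rfl⟩ := Finset.mem_image.1 he
    exact ⟨pt n hn k, pt n hn (k + 1), rfl,
      Or.inl (by rw [pt_val, pt_val, ← succ_mod h2])⟩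
  · rintro ⟨a, b, rfl, h | h⟩
    · refine Finset.mem_image.2 ⟨a.val, Finset.mem_range.2 a.isLt, ?_⟩
      rw [show pt n hn a.val = a from Fin.ext (Nat.mod_eq_of_lt a.isLt),
        show pt n hn (a.val + 1) = b from Fin.ext (by rw [pt_val]; exact h)]
    · refine Finset.mem_image.2 ⟨b.val, Finset.mem_range.2 b.isLt, ?_⟩
      rw [show pt n hn b.val = b from Fin.ext (Nat.mod_eq_of_lt b.isLt),
        show pt n hn (b.val + 1) = a from Fin.ext (by rw [pt_val]; exact h)]
      exact Sym2.eq_swap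

lemma hull_edge_inj {n : ℕ} (hn : 0 < n) (h3 : 3 ≤ n) {j k : ℕ} (hj : j < n) (hk : k < n)
    (h : s(pt n hn j, pt n hn (j + 1)) = s(pt n hn k, pt n hn (k + 1))) : j = k := by
  rw [Sym2.eq_iff] at h
  have e1 : ∀ i i' : ℕ, pt n hn i = pt n hn i' → i % n = i' % n := fun i i' h =>
    congrArg Fin.val h
  rcases h with ⟨h1, h2⟩ | ⟨h1, h2⟩
  · have := e1 _ _ h1
    rw [Nat.mod_eq_of_lt hj, Nat.mod_eq_of_lt hk] at this
    exact this
  · have ha := e1 _ _ h1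
    have hb := e1 _ _ h2
    rw [Nat.mod_eq_of_lt hj, mod2n hn (by omega)] at ha
    rw [mod2n hn (by omega), Nat.mod_eq_of_lt hk] at hb
    split_ifs at ha <;> split_ifs at hb <;> omega

lemma hullE_card {n : ℕ} (hn : 0 < n) (h3 : 3 ≤ n) : (hullE n hn).card = n := by
  unfold hullE
  rw [Finset.card_image_of_injOn, Finset.card_range]
  intro j hj k hk h
  exact hull_edge_inj hn h3 (Finset.mem_range.1 hj) (Finset.mem_range.1 hk) h

/-! ### Non-crossing Hamiltonian cycles are the hull -/

lemma exists_flip (f : ℕ → Bool) {lo hi t0 t1 : ℕ} (h1 : lo ≤ t0) (h2 : t0 ≤ hi)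
    (h3 : lo ≤ t1) (h4 : t1 ≤ hi) (hne : f t0 ≠ f t1) :
    ∃ t, lo ≤ t ∧ t < hi ∧ f t ≠ f (t + 1) := by
  by_contra hcon
  push_neg at hcon
  have hconst : ∀ t, lo ≤ t → t ≤ hi → f t = f lo := by
    intro t
    induction t with
    | zero => intro h _; rw [show lo = 0 by omega]
    | succ m ih =>
      intro hm hm2
      rcases Nat.lt_or_ge lo (m + 1) with h | h
      · rw [← hcon m (by omega) (by omega)]
        exact ih (by omega) (by omega)
      · rw [show lo = m + 1 by omega]
  rw [hconst t0 h1 h2, hconst t1 h3 h4] at hne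
  exact hne rfl

lemma Fe_mod {n : ℕ} (hn : 0 < n) (h2 : 2 ≤ n) (p : Equiv.Perm (Fin n)) (t : ℕ) :
    Fe hn p t = Fe hn p (t % n) := by
  unfold Fe
  rw [Sym2.eq_iff]
  left
  exact ⟨(cyc_eq_iff hn).2 (Nat.mod_mod t n).symm, (cyc_eq_iff hn).2 (succ_mod h2)⟩

lemma ham_hull {n : ℕ} (hn : 0 < n) (h5 : 5 ≤ n) (p : Equiv.Perm (Fin n))
    (hNC : ∀ e1 ∈ (Finset.range n).image (Fe hn p), ∀ e2 ∈ (Finset.range n).image (Fe hn p),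
      ¬ Crosses e1 e2) :
    (Finset.range n).image (Fe hn p) = hullE n hn := by
  have hcyc_ne : ∀ s1 s2 : ℕ, s1 ≤ s2 → s2 - s1 ≠ 0 → s2 - s1 < n →
      cyc hn p s1 ≠ cyc hn p s2 := by
    intro s1 s2 hle hne0 hlt h
    rw [cyc_eq_iff hn] at h
    rw [show s2 = s1 + (s2 - s1) by omega, eq_comm, add_mod_eq_self_iff hn,
      Nat.mod_eq_of_lt hlt] at h
    exact hne0 h
  have hhull : ∀ j, j < n → IsHullEdge (Fe hn p j) := by
    intro j hj
    by_contra hnh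
    set a := cyc hn p j with hadef
    set b := cyc hn p (j + 1) with hbdef
    have hab : a ≠ b := cyc_ne_succ hn (by omega) j
    have h1 : (a.val + 1) % n ≠ b.val := fun h => hnh ⟨a, b, rfl, Or.inl h⟩
    have h2 : (b.val + 1) % n ≠ a.val := fun h => hnh ⟨a, b, rfl, Or.inr h⟩
    set k := (b.val + n - a.val) % n with hkdef
    have hvab : a.val ≠ b.val := fun h => hab (Fin.ext h)
    have hk2 : 2 ≤ k := by
      rw [hkdef, modsub a.isLt b.isLt]
      have hh1 : (a.val + 1) % n ≠ b.val := h1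
      rw [mod2n hn (by omega)] at hh1
      split_ifs at hh1 <;> split <;> omega
    have hkn1 : k ≤ n - 2 := by
      rw [hkdef, modsub a.isLt b.isLt]
      have hh2 : (b.val + 1) % n ≠ a.val := h2
      rw [mod2n hn (by omega)] at hh2
      split_ifs at hh2 <;> split <;> omega
    have hrpt : ∀ m : ℕ, m < n → (((a.val + m) % n) + n - a.val) % n = m := by
      intro m hm
      have hin : (a.val + m) % n = if a.val + m < n then a.val + m else a.val + m - n :=
        mod2n hn (by omega)
      rw [modsub a.isLt (Nat.mod_lt _ hn), hin]
      split_ifs <;> omega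
    -- the two witness points on either side
    set c0 := pt n hn (a.val + 1) with hc0def
    set d0 := pt n hn (a.val + (k + 1)) with hd0def
    have hrc0 : (c0.val + n - a.val) % n = 1 := hrpt 1 (by omega)
    have hrd0 : (d0.val + n - a.val) % n = k + 1 := hrpt (k + 1) (by omega)
    have hra : (a.val + n - a.val) % n = 0 := by rw [modsub a.isLt a.isLt]; simp
    have hrinj : ∀ x x' : Fin n, (x.val + n - a.val) % n = (x'.val + n - a.val) % n →
        x = x' := by
      intro x x' h
      rw [modsub a.isLt x.isLt, modsub a.isLt x'.isLt] at h
      have := x.isLt; have := x'.isLt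
      apply Fin.ext
      split_ifs at h <;> omega
    have hc0a : c0 ≠ a := fun h => by rw [h, hra] at hrc0; omega
    have hc0b : c0 ≠ b := fun h => by rw [h, ← hkdef] at hrc0; omega
    have hd0a : d0 ≠ a := fun h => by rw [h, hra] at hrd0; omega
    have hd0b : d0 ≠ b := fun h => by rw [h, ← hkdef] at hrd0; omega
    -- positions of arbitrary points on the cycle
    have hpos : ∀ x : Fin n, x ≠ a → x ≠ b → ∃ t, j + 2 ≤ t ∧ t ≤ j + n - 1 ∧
        cyc hn p t = x := by
      intro x hxa hxb
      set q0 := (p.symm x).val with hq0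
      have hq0n : q0 < n := (p.symm x).isLt
      have hw : (j + 1) % n < n := Nat.mod_lt _ hn
      set dl := (q0 + n - (j + 1) % n) % n with hdl
      have hdln : dl < n := Nat.mod_lt _ hn
      set t := j + 1 + dl with htdef
      have hcyc : cyc hn p t = x := by
        symm
        rw [eq_cyc_iff hn, ← hq0]
        have h1 : t % n = ((j + 1) % n + dl) % n := by
          rw [htdef, Nat.add_mod (j + 1) dl n, Nat.mod_eq_of_lt hdln]
        rw [h1, hdl, modsub hw hq0n]
        split
        · rw [mod2n hn (by omega)]; split <;> omega
        · rw [mod2n hn (by omega)]; split <;> omega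
      have hdl0 : dl ≠ 0 := by
        intro h0
        apply hxb
        rw [← hcyc, htdef, h0, hbdef]
      have hdl1 : dl ≠ n - 1 := by
        intro h0
        apply hxa
        rw [← hcyc, htdef, h0, hadef]
        apply (cyc_eq_iff hn).2
        rw [show j + 1 + (n - 1) = j + n by omega]
        exact (add_mod_eq_self_iff hn).2 (Nat.mod_self n)
      exact ⟨t, by omega, by omega, hcyc⟩
    obtain ⟨t0, ht01, ht02, ht03⟩ := hpos c0 hc0a hc0b
    obtain ⟨t1, ht11, ht12, ht13⟩ := hpos d0 hd0a hd0b
    set sfun : ℕ → Bool := fun t => decide ((((cyc hn p t).val + n - a.val) % n) < k)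
      with hsfun
    have hs0 : sfun t0 = true := by
      rw [hsfun]; simp only [decide_eq_true_eq]; rw [ht03, hrc0]; omega
    have hs1 : sfun t1 = false := by
      rw [hsfun]; simp only [decide_eq_false_iff_not]; rw [ht13, hrd0]; omega
    obtain ⟨t, htl, htr, hfl⟩ := exists_flip sfun ht01 ht02 ht11 ht12 (by rw [hs0, hs1]; simp)
    set c := cyc hn p t with hcdef
    set d := cyc hn p (t + 1) with hddef
    have hca : a ≠ c := by
      rw [hadef, hcdef]
      exact hcyc_ne j t (by omega) (by omega) (by omega)
    have hcb : b ≠ c := by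
      rw [hbdef, hcdef]
      exact hcyc_ne (j + 1) t (by omega) (by omega) (by omega)
    have hda : a ≠ d := by
      rw [hadef, hddef]
      exact hcyc_ne j (t + 1) (by omega) (by omega) (by omega)
    have hdb : b ≠ d := by
      rw [hbdef, hddef]
      exact hcyc_ne (j + 1) (t + 1) (by omega) (by omega) (by omega)
    have hcd : c ≠ d := by
      rw [hcdef, hddef]
      exact hcyc_ne t (t + 1) (by omega) (by omega) (by omega)
    have hsep : ((c.val + n - a.val) % n < (b.val + n - a.val) % n) ↔
        ¬((d.val + n - a.val) % n < (b.val + n - a.val) % n) := by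
      rw [← hkdef]
      constructor
      · intro hA hB
        exact hfl (by rw [hsfun]; simp only; rw [← hcdef, ← hddef]
                      simp [hA, hB])
      · intro hB
        by_contra hA
        exact hfl (by rw [hsfun]; simp only; rw [← hcdef, ← hddef]
                      simp [hA, hB])
    have hcross : Crosses (Fe hn p j) (Fe hn p t) :=
      ⟨a, b, c, d, rfl, rfl, hab, hcd, hca, hda, hcb, hdb, hsep⟩
    have hFjU : Fe hn p j ∈ (Finset.range n).image (Fe hn p) :=
      Finset.mem_image.2 ⟨j, Finset.mem_range.2 hj, rfl⟩
    have hFtU : Fe hn p t ∈ (Finset.range n).image (Fe hn p) :=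
      Finset.mem_image.2 ⟨t % n, Finset.mem_range.2 (Nat.mod_lt _ hn),
        (Fe_mod hn (by omega) p t).symm⟩
    exact hNC _ hFjU _ hFtU hcross
  apply Finset.eq_of_subset_of_card_le
  · intro e he
    obtain ⟨i, hi, rfl⟩ := Finset.mem_image.1 he
    exact (mem_hullE hn (by omega)).2 (hhull i (Finset.mem_range.1 hi))
  · rw [hullE_card hn (by omega), Finset.card_image_of_injOn, Finset.card_range]
    intro i hi j hj h
    have hi' := Finset.mem_range.1 hi
    have hj' := Finset.mem_range.1 hj
    unfold Fe at h
    rw [Sym2.eq_iff] at h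
    rcases h with ⟨ha, _⟩ | ⟨ha, hb⟩
    · rw [cyc_eq_iff hn, Nat.mod_eq_of_lt hi', Nat.mod_eq_of_lt hj'] at ha
      exact ha
    · rw [cyc_eq_iff hn, Nat.mod_eq_of_lt hi', mod2n hn (by omega)] at ha
      rw [cyc_eq_iff hn, mod2n hn (by omega), Nat.mod_eq_of_lt hj'] at hb
      split_ifs at ha <;> split_ifs at hb <;> omega

/-! ### Boundary paths -/

lemma rot_aux {n : ℕ} (hn : 0 < n) (k i : ℕ) (hi : i < n) :
    ((k + 1 + i) % n + n - (k + 1) % n) % n = i := by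
  have hw : (k + 1) % n < n := Nat.mod_lt _ hn
  have h1 : (k + 1 + i) % n = ((k + 1) % n + i) % n := by
    rw [Nat.add_mod (k + 1) i n, Nat.mod_eq_of_lt hi]
  have h2 : ((k + 1) % n + i) % n = if (k + 1) % n + i < n then (k + 1) % n + i
      else (k + 1) % n + i - n := mod2n hn (by omega)
  rw [h1, modsub hw (Nat.mod_lt _ hn), h2]
  split_ifs <;> omega

lemma rot_aux2 {n : ℕ} (hn : 0 < n) (k j : ℕ) (hj : j < n) :
    (k + 1 + (j + n - (k + 1) % n) % n) % n = j := by
  have hw : (k + 1) % n < n := Nat.mod_lt _ hn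
  rw [modsub hw hj]
  have h1 : ∀ y, y < n → (k + 1 + y) % n = ((k + 1) % n + y) % n := by
    intro y hy
    rw [Nat.add_mod (k + 1) y n, Nat.mod_eq_of_lt hy]
  split
  · rw [h1 _ (by omega), mod2n hn (by omega)]
    split <;> omega
  · rw [h1 _ (by omega), mod2n hn (by omega)]
    split <;> omega

/-- rotation permutation sending `i` to `k+1+i` (mod `n`). -/
def rotPerm (n : ℕ) (hn : 0 < n) (k : ℕ) : Equiv.Perm (Fin n) where
  toFun i := pt n hn (k + 1 + i.val)
  invFun j := pt n hn (j.val + n - (k + 1) % n)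
  left_inv i := Fin.ext (by rw [pt_val, pt_val]; exact rot_aux hn k i.val i.isLt)
  right_inv j := Fin.ext (by rw [pt_val, pt_val]; exact rot_aux2 hn k j.val j.isLt)

lemma rot_cyc {n : ℕ} (hn : 0 < n) (k i : ℕ) :
    cyc hn (rotPerm n hn k) i = pt n hn (k + 1 + i) := by
  apply Fin.ext
  show (k + 1 + i % n) % n = (k + 1 + i) % n
  conv_rhs => rw [Nat.add_mod (k + 1) i n]
  rw [Nat.add_mod (k + 1) (i % n) n, Nat.mod_mod]

lemma rotPathEdges {n : ℕ} (hn : 0 < n) (h3 : 3 ≤ n) (k : ℕ) (hk : k < n) :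
    pathEdges (rotPerm n hn k) = (hullE n hn).erase (s(pt n hn k, pt n hn (k + 1))) := by
  have hmem : s(pt n hn k, pt n hn (k + 1)) ∈ hullE n hn :=
    Finset.mem_image.2 ⟨k, Finset.mem_range.2 hk, rfl⟩
  apply Finset.eq_of_subset_of_card_le
  · intro e he
    obtain ⟨i, hi, rfl⟩ := (mem_pathEdges hn).1 he
    rw [Finset.mem_erase]
    constructor
    · -- Fe (rotPerm k) i ≠ deleted hull edge
      unfold Fe
      rw [rot_cyc hn, rot_cyc hn]
      intro h
      rw [Sym2.eq_iff] at h
      rcases h with ⟨h1, _⟩ | ⟨h1, h2⟩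
      · have hv : (k + (1 + i)) % n = k % n := by
          have := congrArg Fin.val h1
          rw [show k + 1 + i = k + (1 + i) by omega] at this
          exact this
        rw [add_mod_eq_self_iff hn, Nat.mod_eq_of_lt (by omega)] at hv
        omega
      · have e1 : (k + 1 + i) % n = (k + 1) % n := congrArg Fin.val h1
        rw [show k + 1 + i = (k + 1) + i by omega, add_mod_eq_self_iff hn,
          Nat.mod_eq_of_lt (by omega)] at e1
        subst e1
        have e2 : (k + 2) % n = k % n := by
          have := congrArg Fin.val h2
          rw [show k + 1 + (0 + 1) = k + 2 by omega] at this
          exact this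
        rw [add_mod_eq_self_iff hn, Nat.mod_eq_of_lt (by omega)] at e2
        omega
    · -- it is a hull edge
      apply (mem_hullE hn (by omega)).2
      refine ⟨cyc hn (rotPerm n hn k) i, cyc hn (rotPerm n hn k) (i + 1), rfl, Or.inl ?_⟩
      rw [rot_cyc hn, rot_cyc hn, pt_val, pt_val, ← succ_mod (show 2 ≤ n by omega)]
      exact congrArg (· % n) (by omega)
  · rw [Finset.card_erase_of_mem hmem, hullE_card hn h3, card_pathEdges hn]

/-- the `k`-th boundary path as a vertex of the path graph. -/
def bVert (n : ℕ) (h5 : 5 ≤ n) (k : ℕ) (hk : k < n) : PVert n :=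
  ⟨(hullE n (by omega)).erase (s(pt n (by omega) k, pt n (by omega) (k + 1))),
    ⟨rotPerm n (by omega) k, (rotPathEdges (by omega) (by omega) k hk).symm⟩,
    fun e he _ _ => hull_not_crosses
      ((mem_hullE (by omega) (by omega)).1 (Finset.mem_of_mem_erase he))⟩

lemma isBoundary_bVert {n : ℕ} (h5 : 5 ≤ n) (k : ℕ) (hk : k < n) :
    IsBoundary (bVert n h5 k hk) := fun e he =>
  (mem_hullE (by omega) (by omega)).1 (Finset.mem_of_mem_erase he)

lemma boundary_char {n : ℕ} (h5 : 5 ≤ n) (hn : 0 < n) (w : PVert n) (hw : IsBoundary w) :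
    ∃ k, ∃ hk : k < n, w = bVert n h5 k hk := by
  have hsub : w.1 ⊆ hullE n hn := fun e he => (mem_hullE hn (by omega)).2 (hw e he)
  obtain ⟨p, hp⟩ := w.2.1
  have hcw : w.1.card = n - 1 := by rw [hp]; exact card_pathEdges hn p
  have hex : ∃ e ∈ hullE n hn, e ∉ w.1 := by
    by_contra hcon
    push_neg at hcon
    have := Finset.card_le_card hcon
    rw [hullE_card hn (by omega), hcw] at this
    omega
  obtain ⟨e, heH, hew⟩ := hex
  have heq : w.1 = (hullE n hn).erase e := by
    apply Finset.eq_of_subset_of_card_le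
    · intro x hx
      exact Finset.mem_erase.2 ⟨fun h => hew (h ▸ hx), hsub hx⟩
    · rw [Finset.card_erase_of_mem heH, hullE_card hn (by omega), hcw]
  obtain ⟨k, hk, hke⟩ := Finset.mem_image.1 heH
  refine ⟨k, Finset.mem_range.1 hk, Subtype.ext ?_⟩
  show w.1 = _
  rw [heq, ← hke]
  rfl

lemma bVert_val_ne {n : ℕ} (h5 : 5 ≤ n) {k k' : ℕ} (hk : k < n) (hk' : k' < n)
    (hne : k ≠ k') : bVert n h5 k hk ≠ bVert n h5 k' hk' := by
  intro h
  have hn : 0 < n := by omega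
  have h1 : (bVert n h5 k hk).1 = (bVert n h5 k' hk').1 := congrArg Subtype.val h
  have hmem : s(pt n hn k, pt n hn (k + 1)) ∈ hullE n hn :=
    Finset.mem_image.2 ⟨k, Finset.mem_range.2 hk, rfl⟩
  have := (Finset.erase_inj (hullE n hn) hmem).1 h1
  exact hne (hull_edge_inj hn (by omega) hk hk' this)

lemma boundary_ncard {n : ℕ} (h5 : 5 ≤ n) :
    {w : PVert n | IsBoundary w}.ncard = n := by
  have hn : 0 < n := by omega
  have hset : {w : PVert n | IsBoundary w} =
      ↑(Finset.univ.image (fun k : Fin n => bVert n h5 k.val k.isLt)) := by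
    ext w
    simp only [Set.mem_setOf_eq, Finset.coe_image, Finset.coe_univ, Set.image_univ,
      Set.mem_range]
    constructor
    · intro hw
      obtain ⟨k, hk, rfl⟩ := boundary_char h5 hn w hw
      exact ⟨⟨k, hk⟩, rfl⟩
    · rintro ⟨k, rfl⟩
      exact isBoundary_bVert h5 k.val k.isLt
  rw [hset, Set.ncard_coe_finset, Finset.card_image_of_injective _ ?_, Finset.card_univ,
    Fintype.card_fin]
  intro k k' h
  by_contra hne
  exact bVert_val_ne h5 k.isLt k'.isLt (fun hv => hne (Fin.ext hv)) h

lemma clique_of_hull {n : ℕ} (h5 : 5 ≤ n) (hn : 0 < n) {u v : PVert n}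
    (huv : u.1 ∪ v.1 = hullE n hn) :
    unionClique u v = {w : PVert n | IsBoundary w} := by
  ext w
  simp only [unionClique, Set.mem_setOf_eq]
  constructor
  · rintro ⟨e, he, hw⟩ x hx
    rw [hw, huv] at hx
    exact (mem_hullE hn (by omega)).1 (Finset.mem_of_mem_erase hx)
  · intro hb
    obtain ⟨k, hk, rfl⟩ := boundary_char h5 hn w hb
    refine ⟨s(pt n hn k, pt n hn (k + 1)), ?_, ?_⟩
    · rw [huv]
      exact Finset.mem_image.2 ⟨k, Finset.mem_range.2 hk, rfl⟩
    · rw [huv]; rfl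

/-- Among the union max-cliques of `G(P)` (`n ≥ 5`), all have size 2 except for
exactly one, of size `n`, whose vertices are precisely the `n` boundary paths. -/
theorem unionClique_card (n : ℕ) (hn : 5 ≤ n) :
    (∀ u v : PVert n, (pathGraph n).Adj u v →
      (unionClique u v).ncard = 2 ∨
      (unionClique u v = {w : PVert n | IsBoundary w} ∧
        {w : PVert n | IsBoundary w}.ncard = n)) ∧
    (∃ u v : PVert n, (pathGraph n).Adj u v ∧
      unionClique u v = {w : PVert n | IsBoundary w}) := by
  have hn0 : 0 < n := by omega
  constructor
  · intro u v hadj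
    obtain ⟨hneuv, hcard⟩ := hadj
    obtain ⟨p, hp⟩ := u.2.1
    obtain ⟨q, hq⟩ := v.2.1
    have hcu : u.1.card = n - 1 := by rw [hp]; exact card_pathEdges hn0 p
    have hcv : v.1.card = n - 1 := by rw [hq]; exact card_pathEdges hn0 q
    have hdisj : Disjoint (u.1 \ v.1) (v.1 \ u.1) := disjoint_sdiff_sdiff
    have hcard2 : (u.1 \ v.1).card + (v.1 \ u.1).card = 2 := by
      rw [← Finset.card_union_of_disjoint hdisj]
      exact hcard
    have heqc : (u.1 \ v.1).card = (v.1 \ u.1).card := by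
      have h1 := Finset.card_sdiff_add_card_inter u.1 v.1
      have h2 := Finset.card_sdiff_add_card_inter v.1 u.1
      rw [Finset.inter_comm] at h2
      omega
    obtain ⟨f, hf⟩ := Finset.card_eq_one.1 (show (u.1 \ v.1).card = 1 by omega)
    obtain ⟨g, hg⟩ := Finset.card_eq_one.1 (show (v.1 \ u.1).card = 1 by omega)
    have hfu : f ∈ u.1 ∧ f ∉ v.1 := by
      have : f ∈ u.1 \ v.1 := by rw [hf]; exact Finset.mem_singleton_self f
      exact Finset.mem_sdiff.1 this
    have hgv : g ∈ v.1 ∧ g ∉ u.1 := by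
      have : g ∈ v.1 \ u.1 := by rw [hg]; exact Finset.mem_singleton_self g
      exact Finset.mem_sdiff.1 this
    have hmem_v : ∀ x ∈ u.1, x ≠ f → x ∈ v.1 := by
      intro x hx hxf
      by_contra hxv
      exact hxf (Finset.mem_singleton.1 (hf ▸ Finset.mem_sdiff.2 ⟨hx, hxv⟩))
    have hmem_u : ∀ x ∈ v.1, x ≠ g → x ∈ u.1 := by
      intro x hx hxg
      by_contra hxu
      exact hxg (Finset.mem_singleton.1 (hg ▸ Finset.mem_sdiff.2 ⟨hx, hxu⟩))
    have hUv : u.1 ∪ v.1 = insert g u.1 := by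
      ext x
      simp only [Finset.mem_union, Finset.mem_insert]
      constructor
      · rintro (hx | hx)
        · exact Or.inr hx
        · by_cases hxu : x ∈ u.1
          · exact Or.inr hxu
          · exact Or.inl (Finset.mem_singleton.1 (hg ▸ Finset.mem_sdiff.2 ⟨hx, hxu⟩))
      · rintro (rfl | hx)
        · exact Or.inr hgv.1
        · exact Or.inl hx
    have hvE : v.1 = (u.1 ∪ v.1).erase f := by
      ext x
      rw [Finset.mem_erase, Finset.mem_union]
      constructor
      · intro hx
        exact ⟨fun h => hfu.2 (h ▸ hx), Or.inr hx⟩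
      · rintro ⟨hxf, hx | hx⟩
        · exact hmem_v x hx hxf
        · exact hx
    have huE : u.1 = (u.1 ∪ v.1).erase g := by
      ext x
      rw [Finset.mem_erase, Finset.mem_union]
      constructor
      · intro hx
        exact ⟨fun h => hgv.2 (h ▸ hx), Or.inl hx⟩
      · rintro ⟨hxg, hx | hx⟩
        · exact hx
        · exact hmem_u x hx hxg
    have hfg : f ≠ g := fun h => hgv.2 (h ▸ hfu.1)
    have pair_case : (∀ (w : PVert n) (e : Sym2 (Fin n)), e ∈ u.1 ∪ v.1 → e ≠ f → e ≠ g →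
        w.1 = (u.1 ∪ v.1).erase e → False) → (unionClique u v).ncard = 2 := by
      intro hno
      have hclq : unionClique u v = {u, v} := by
        ext w
        simp only [unionClique, Set.mem_setOf_eq, Set.mem_insert_iff, Set.mem_singleton_iff]
        constructor
        · rintro ⟨e, he, hw⟩
          by_cases hef : e = f
          · right; apply Subtype.ext; rw [hw, hef, ← hvE]
          · by_cases heg : e = g
            · left; apply Subtype.ext; rw [hw, heg, ← huE]
            · exact (hno w e he hef heg hw).elim
        · rintro (rfl | rfl)
          · exact ⟨g, Finset.mem_union_right _ hgv.1, huE⟩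
          · exact ⟨f, Finset.mem_union_left _ hfu.1, hvE⟩
      rw [hclq]
      exact Set.ncard_pair hneuv
    have hgmem : g ∈ pathEdges q := hq ▸ hgv.1
    obtain ⟨ig, hig, hgeq⟩ := (mem_pathEdges hn0).1 hgmem
    set y := cyc hn0 q ig with hydef
    set z := cyc hn0 q (ig + 1) with hzdef
    have hyz : y ≠ z := cyc_ne_succ hn0 (by omega) ig
    set A := (p.symm y).val with hAdef
    set B := (p.symm z).val with hBdef
    have hAn : A < n := (p.symm y).isLt
    have hBn : B < n := (p.symm z).isLt
    have hyA : y = cyc hn0 p A := (eq_cyc_iff hn0).2 (by rw [Nat.mod_eq_of_lt hAn])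
    have hzB : z = cyc hn0 p B := (eq_cyc_iff hn0).2 (by rw [Nat.mod_eq_of_lt hBn])
    have hAB : A ≠ B := fun h => hyz (by rw [hyA, hzB, h])
    have hgyz : g = s(cyc hn0 p A, cyc hn0 p B) := by
      rw [hgeq, show Fe hn0 q ig = s(y, z) from rfl, hyA, hzB]
    set a0 := min A B with ha0
    set b0 := max A B with hb0
    have ha0b0 : a0 < b0 := by
      rw [ha0, hb0]
      rcases Nat.lt_or_ge A B with h | h
      · rw [min_eq_left h.le, max_eq_right h.le]; exact h
      · rw [min_eq_right h, max_eq_left h]; omega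
    have hb0n : b0 < n := by rw [hb0]; omega
    have hga0 : g = s(cyc hn0 p a0, cyc hn0 p b0) := by
      rcases le_or_gt A B with h | h
      · rw [show a0 = A from by rw [ha0]; exact min_eq_left h,
          show b0 = B from by rw [hb0]; exact max_eq_right h]
        exact hgyz
      · rw [show a0 = B from by rw [ha0]; exact min_eq_right h.le,
          show b0 = A from by rw [hb0]; exact max_eq_left h.le, hgyz]
        exact Sym2.eq_swap
    by_cases hham : a0 = 0 ∧ b0 = n - 1
    · -- Hamiltonian union
      by_cases hcross : Crosses f g ∨ Crosses g f
      · left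
        apply pair_case
        intro w e he hef heg hw
        have hfw : f ∈ w.1 := by
          rw [hw]
          exact Finset.mem_erase.2 ⟨fun h => hef h.symm, Finset.mem_union_left _ hfu.1⟩
        have hgw : g ∈ w.1 := by
          rw [hw]
          exact Finset.mem_erase.2 ⟨fun h => heg h.symm, Finset.mem_union_right _ hgv.1⟩
        rcases hcross with hc | hc
        · exact w.2.2 f hfw g hgw hc
        · exact w.2.2 g hgw f hfw hc
      · push_neg at hcross
        have hgFe : g = Fe hn0 p (n - 1) := by
          have hc0 : cyc hn0 p (n - 1 + 1) = cyc hn0 p 0 := by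
            rw [cyc_eq_iff hn0, show n - 1 + 1 = n by omega, Nat.mod_self, Nat.zero_mod]
          rw [hga0, hham.1, hham.2]
          show s(cyc hn0 p 0, cyc hn0 p (n - 1)) = s(cyc hn0 p (n - 1), cyc hn0 p (n - 1 + 1))
          rw [hc0]
          exact Sym2.eq_swap
        have hU : u.1 ∪ v.1 = (Finset.range n).image (Fe hn0 p) := by
          rw [hUv, hp, pathEdges_eq_image hn0]
          ext x
          simp only [Finset.mem_insert, Finset.mem_image, Finset.mem_range]
          constructor
          · rintro (rfl | ⟨i, hi, rfl⟩)
            · exact ⟨n - 1, by omega, hgFe.symm⟩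
            · exact ⟨i, by omega, rfl⟩
          · rintro ⟨i, hi, rfl⟩
            by_cases hin : i = n - 1
            · left; rw [hin, ← hgFe]
            · right; exact ⟨i, by omega, rfl⟩
        have hNC : ∀ e1 ∈ (Finset.range n).image (Fe hn0 p),
            ∀ e2 ∈ (Finset.range n).image (Fe hn0 p), ¬ Crosses e1 e2 := by
          intro e1 he1 e2 he2
          rw [← hU, hUv, Finset.mem_insert] at he1 he2
          rcases he1 with rfl | h1
          · rcases he2 with rfl | h2
            · exact v.2.2 _ hgv.1 _ hgv.1
            · by_cases h2f : e2 = f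
              · rw [h2f]; exact hcross.2
              · exact v.2.2 _ hgv.1 e2 (hmem_v e2 h2 h2f)
          · rcases he2 with rfl | h2
            · by_cases h1f : e1 = f
              · rw [h1f]; exact hcross.1
              · exact v.2.2 e1 (hmem_v e1 h1 h1f) _ hgv.1
            · exact u.2.2 e1 h1 e2 h2
        have hhull : u.1 ∪ v.1 = hullE n hn0 := by
          rw [hU]; exact ham_hull hn0 hn p hNC
        right
        exact ⟨clique_of_hull hn hn0 hhull, boundary_ncard hn⟩
    · -- non-Hamiltonian union
      left
      apply pair_case
      intro w e he hef heg hw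
      obtain ⟨sw, hsw⟩ := w.2.1
      obtain ⟨m, l, hm0, hmn, hln, hlm, hglm⟩ :
          ∃ m l : ℕ, 0 < m ∧ m < n - 1 ∧ l < n ∧ l ≠ m ∧
            g = s(cyc hn0 p m, cyc hn0 p l) := by
        by_cases h0 : a0 = 0
        · have hbn1 : b0 < n - 1 := by
            rcases Nat.lt_or_ge b0 (n - 1) with h | h
            · exact h
            · exact absurd ⟨h0, by omega⟩ hham
          exact ⟨b0, a0, by omega, hbn1, by omega, by omega,
            by rw [hga0]; exact Sym2.eq_swap⟩
        · exact ⟨a0, b0, by omega, by omega, by omega, by omega, hga0⟩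
      set x := cyc hn0 p m with hxdef
      set E1 := Fe hn0 p (m - 1) with hE1
      set E2 := Fe hn0 p m with hE2
      have hE1u : E1 ∈ u.1 := by
        rw [hp]; exact (mem_pathEdges hn0).2 ⟨m - 1, by omega, rfl⟩
      have hE2u : E2 ∈ u.1 := by
        rw [hp]; exact (mem_pathEdges hn0).2 ⟨m, by omega, rfl⟩
      have hxE1 : x ∈ E1 := by
        rw [hE1, mem_Fe_iff hn0, hxdef, symm_cyc hn0]
        right
        rw [show m - 1 + 1 = m by omega]
      have hxE2 : x ∈ E2 := by
        rw [hE2, mem_Fe_iff hn0, hxdef, symm_cyc hn0]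
        left; rfl
      have hxg : x ∈ g := by rw [hglm]; exact Sym2.mem_mk_left _ _
      have hgE1 : g ≠ E1 := fun h => hgv.2 (h ▸ hE1u)
      have hgE2 : g ≠ E2 := fun h => hgv.2 (h ▸ hE2u)
      have hE12 : E1 ≠ E2 := by
        intro h
        have := Fe_inj hn0 (by omega) (by omega) h
        omega
      have hgsym : s(cyc hn0 p l, cyc hn0 p m) = g := by
        rw [hglm]; exact Sym2.eq_swap
      have hlm1 : l ≠ m - 1 := by
        intro h
        apply hgv.2
        rw [hglm, h]
        have hswap : s(cyc hn0 p m, cyc hn0 p (m - 1)) = E1 := by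
          rw [hE1]
          show _ = s(cyc hn0 p (m - 1), cyc hn0 p (m - 1 + 1))
          rw [show m - 1 + 1 = m by omega]
          exact Sym2.eq_swap
        rw [hswap]
        exact hE1u
      have hlm2 : l ≠ m + 1 := by
        intro h
        apply hgv.2
        rw [hglm, h]
        exact hE2u
      have hf12 : f = E1 ∨ f = E2 := by
        by_contra hcon
        push_neg at hcon
        have h3 : 3 ≤ degIn v.1 x :=
          three_le_degIn (hmem_v E1 hE1u (fun h => hcon.1 h.symm))
            (hmem_v E2 hE2u (fun h => hcon.2 h.symm)) hgv.1 hxE1 hxE2 hxg hE12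
            (Ne.symm hgE1) (Ne.symm hgE2)
        have h4 : degIn v.1 x ≤ 2 := by rw [hq]; exact degIn_pathEdges_le_two hn0 q x
        omega
      have he12 : e = E1 ∨ e = E2 := by
        by_contra hcon
        push_neg at hcon
        have hE1w : E1 ∈ w.1 := by
          rw [hw]
          exact Finset.mem_erase.2 ⟨fun h => hcon.1 h.symm, Finset.mem_union_left _ hE1u⟩
        have hE2w : E2 ∈ w.1 := by
          rw [hw]
          exact Finset.mem_erase.2 ⟨fun h => hcon.2 h.symm, Finset.mem_union_left _ hE2u⟩
        have hgw : g ∈ w.1 := by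
          rw [hw]
          exact Finset.mem_erase.2 ⟨fun h => heg h.symm, Finset.mem_union_right _ hgv.1⟩
        have h3 : 3 ≤ degIn w.1 x :=
          three_le_degIn hE1w hE2w hgw hxE1 hxE2 hxg hE12 (Ne.symm hgE1) (Ne.symm hgE2)
        have h4 : degIn w.1 x ≤ 2 := by rw [hsw]; exact degIn_pathEdges_le_two hn0 sw x
        omega
      have cyc_contra : ∀ (r : Equiv.Perm (Fin n)) (a b : ℕ), a + 2 ≤ b → b < n →
          insert (s(cyc hn0 p a, cyc hn0 p b)) ((Finset.Ico a b).image (Fe hn0 p))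
            ⊆ pathEdges r → False := by
        intro r a b hab hb hsub
        exact path_min_degree hn0 hsub ⟨_, Finset.mem_insert_self _ _⟩
          (cycle_no_deg_one hn0 hab hb)
      rcases hf12 with hfE1 | hfE2
      · -- f is the left edge, e is the right edge
        have heE2 : e = E2 := by
          rcases he12 with h | h
          · exact absurd (h.trans hfE1.symm) hef
          · exact h
        have hlt : l < m := by
          by_contra hge
          push_neg at hge
          have hlgt : m + 2 ≤ l := by omega
          apply cyc_contra q m l hlgt hln
          intro ed hed
          rw [← hq]
          rcases Finset.mem_insert.1 hed with rfl | hed2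
          · rw [← hglm]; exact hgv.1
          · obtain ⟨i, hi, rfl⟩ := Finset.mem_image.1 hed2
            rw [Finset.mem_Ico] at hi
            apply hmem_v
            · rw [hp]; exact (mem_pathEdges hn0).2 ⟨i, by omega, rfl⟩
            · rw [hfE1, hE1]
              intro hfe
              have := Fe_inj hn0 (by omega) (by omega) hfe
              omega
        have hlt2 : l + 2 ≤ m := by omega
        apply cyc_contra sw l m hlt2 (by omega)
        intro ed hed
        rw [← hsw, hw]
        rcases Finset.mem_insert.1 hed with rfl | hed2
        · refine Finset.mem_erase.2 ⟨?_, ?_⟩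
          · rw [hgsym]; exact fun h => heg h.symm
          · rw [hgsym]; exact Finset.mem_union_right _ hgv.1
        · obtain ⟨i, hi, rfl⟩ := Finset.mem_image.1 hed2
          rw [Finset.mem_Ico] at hi
          refine Finset.mem_erase.2 ⟨?_, Finset.mem_union_left _ ?_⟩
          · rw [heE2, hE2]
            intro hfe
            have := Fe_inj hn0 (by omega) (by omega) hfe
            omega
          · rw [hp]; exact (mem_pathEdges hn0).2 ⟨i, by omega, rfl⟩
      · -- f is the right edge, e is the left edge
        have heE1 : e = E1 := by
          rcases he12 with h | h
          · exact h
          · exact absurd (h.trans hfE2.symm) hef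
        have hlt : m < l := by
          by_contra hge
          push_neg at hge
          have hlgt : l + 2 ≤ m := by omega
          apply cyc_contra q l m hlgt (by omega)
          intro ed hed
          rw [← hq]
          rcases Finset.mem_insert.1 hed with rfl | hed2
          · rw [hgsym]; exact hgv.1
          · obtain ⟨i, hi, rfl⟩ := Finset.mem_image.1 hed2
            rw [Finset.mem_Ico] at hi
            apply hmem_v
            · rw [hp]; exact (mem_pathEdges hn0).2 ⟨i, by omega, rfl⟩
            · rw [hfE2, hE2]
              intro hfe
              have := Fe_inj hn0 (by omega) (by omega) hfe
              omega
        have hlt2 : m + 2 ≤ l := by omega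
        apply cyc_contra sw m l hlt2 hln
        intro ed hed
        rw [← hsw, hw]
        rcases Finset.mem_insert.1 hed with rfl | hed2
        · refine Finset.mem_erase.2 ⟨?_, ?_⟩
          · rw [← hglm]; exact fun h => heg h.symm
          · rw [← hglm]; exact Finset.mem_union_right _ hgv.1
        · obtain ⟨i, hi, rfl⟩ := Finset.mem_image.1 hed2
          rw [Finset.mem_Ico] at hi
          refine Finset.mem_erase.2 ⟨?_, Finset.mem_union_left _ ?_⟩
          · rw [heE1, hE1]
            intro hfe
            have := Fe_inj hn0 (by omega) (by omega) hfe
            omega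
          · rw [hp]; exact (mem_pathEdges hn0).2 ⟨i, by omega, rfl⟩
  · -- existence of the boundary clique
    have h0n : (0 : ℕ) < n := by omega
    have h1n : (1 : ℕ) < n := by omega
    set u := bVert n hn 0 h0n with hu
    set v := bVert n hn 1 h1n with hv
    set e0 : Sym2 (Fin n) := s(pt n hn0 0, pt n hn0 (0 + 1)) with he0
    set e1 : Sym2 (Fin n) := s(pt n hn0 1, pt n hn0 (1 + 1)) with he1
    have he0H : e0 ∈ hullE n hn0 := Finset.mem_image.2 ⟨0, Finset.mem_range.2 h0n, rfl⟩
    have he1H : e1 ∈ hullE n hn0 := Finset.mem_image.2 ⟨1, Finset.mem_range.2 h1n, rfl⟩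
    have he01 : e0 ≠ e1 := by
      intro h
      have := hull_edge_inj hn0 (by omega) h0n h1n h
      omega
    have hu1 : u.1 = (hullE n hn0).erase e0 := rfl
    have hv1 : v.1 = (hullE n hn0).erase e1 := rfl
    have hunion : u.1 ∪ v.1 = hullE n hn0 := by
      rw [hu1, hv1]
      ext xx
      simp only [Finset.mem_union, Finset.mem_erase]
      constructor
      · rintro (⟨_, hmm⟩ | ⟨_, hmm⟩) <;> exact hmm
      · intro hx
        by_cases hxe : xx = e0
        · right; exact ⟨by rw [hxe]; exact he01, hx⟩
        · left; exact ⟨hxe, hx⟩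
    refine ⟨u, v, ⟨bVert_val_ne hn h0n h1n (by omega), ?_⟩, clique_of_hull hn hn0 hunion⟩
    have hsd1 : u.1 \ v.1 = {e1} := by
      rw [hu1, hv1]
      ext xx
      simp only [Finset.mem_sdiff, Finset.mem_erase, Finset.mem_singleton]
      constructor
      · rintro ⟨⟨hx0, hxH⟩, hxn⟩
        by_contra hne
        exact hxn ⟨hne, hxH⟩
      · rintro rfl
        exact ⟨⟨Ne.symm he01, he1H⟩, fun hc => hc.1 rfl⟩
    have hsd2 : v.1 \ u.1 = {e0} := by
      rw [hu1, hv1]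
      ext xx
      simp only [Finset.mem_sdiff, Finset.mem_erase, Finset.mem_singleton]
      constructor
      · rintro ⟨⟨hx0, hxH⟩, hxn⟩
        by_contra hne
        exact hxn ⟨hne, hxH⟩
      · rintro rfl
        exact ⟨⟨he01, he0H⟩, fun hc => hc.1 rfl⟩
    rw [hsd1, hsd2, ← Finset.insert_eq,
      Finset.card_insert_of_notMem (by simp [Ne.symm he01]), Finset.card_singleton]

end PG
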